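/- The first L components of the augmented-CEM detector w_ACEM = R̃⁻¹d̃/(d̃ᵀR̃⁻¹d̃) are a positive scalar multiple of the MF detector w_MF = K⁻¹(d-m)/((d-m)ᵀK⁻¹(d-m)), i.e. w_ACEM(1:L) = c·w_MF with c = c_ACEM/c_MF, provided both normalizing denominators are nonzero. -/

import Mathlib

open Matrix

theorem acem_equiv_mf {L : ℕ} (R : Matrix (Fin L) (Fin L) ℝ)
    (m d : Fin L → ℝ) (hR : R.PosDef)
    (h1 : 1 - m ⬝ᵥ R⁻¹ *ᵥ m ≠ 0)
    (hK : IsUnit (R - vecMulVec m m).det)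
    (hMFden : (d - m) ⬝ᵥ (R - vecMulVec m m)⁻¹ *ᵥ (d - m) ≠ 0)
    (hACEMden :
      Sum.elim d 1 ⬝ᵥ
        (fromBlocks R (fun i (_ : Fin 1) => m i) (fun (_ : Fin 1) j => m j) 1)⁻¹ *ᵥ
        Sum.elim d 1 ≠ 0) :
    (fun i : Fin L =>
        ((Sum.elim d 1 ⬝ᵥ
            (fromBlocks R (fun i (_ : Fin 1) => m i) (fun (_ : Fin 1) j => m j) 1)⁻¹ *ᵥ
            Sum.elim d 1)⁻¹ •
          ((fromBlocks R (fun i (_ : Fin 1) => m i) (fun (_ : Fin 1) j => m j) 1)⁻¹ *ᵥ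
            Sum.elim d 1)) (Sum.inl i)) =
      ((Sum.elim d 1 ⬝ᵥ
          (fromBlocks R (fun i (_ : Fin 1) => m i) (fun (_ : Fin 1) j => m j) 1)⁻¹ *ᵥ
          Sum.elim d 1)⁻¹ /
        ((d - m) ⬝ᵥ (R - vecMulVec m m)⁻¹ *ᵥ (d - m))⁻¹) •
        (((d - m) ⬝ᵥ (R - vecMulVec m m)⁻¹ *ᵥ (d - m))⁻¹ •
          ((R - vecMulVec m m)⁻¹ *ᵥ (d - m))) := by
  haveI : Invertible (1 : Matrix (Fin 1) (Fin 1) ℝ) := invertibleOne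
  set B : Matrix (Fin L) (Fin 1) ℝ := fun i _ => m i with hB
  set C : Matrix (Fin 1) (Fin L) ℝ := fun _ j => m j with hC
  have hBC : B * ⅟(1 : Matrix (Fin 1) (Fin 1) ℝ) * C = vecMulVec m m := by
    rw [invOf_one, Matrix.mul_one]
    ext i j
    rw [Matrix.mul_apply]
    simp [hB, hC, Matrix.mul_apply, vecMulVec_apply]
  haveI invK : Invertible (R - vecMulVec m m) := (R - vecMulVec m m).invertibleOfIsUnitDet hK
  haveI : Invertible (R - B * ⅟(1 : Matrix (Fin 1) (Fin 1) ℝ) * C) := by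
    rw [hBC]; infer_instance
  haveI := fromBlocks₂₂Invertible R B C (1 : Matrix (Fin 1) (Fin 1) ℝ)
  -- compute the first-block of R̃⁻¹ *ᵥ d̃
  have hmain : ∀ i : Fin L,
      ((fromBlocks R B C 1)⁻¹ *ᵥ Sum.elim d 1) (Sum.inl i)
        = ((R - vecMulVec m m)⁻¹ *ᵥ (d - m)) i := by
    intro i
    rw [← invOf_eq_nonsing_inv, invOf_fromBlocks₂₂_eq, ← invOf_eq_nonsing_inv]
    simp only [fromBlocks_mulVec, Sum.elim_inl, hBC]
    simp [Matrix.mulVec, dotProduct, hB, Matrix.mul_apply, mul_sub, sub_mul,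
      Finset.sum_sub_distrib, mul_comm, mul_assoc, mul_left_comm]
    rw [Matrix.mul_apply (M := (R - vecMulVec m m)⁻¹) (N := B)]
    simp only [mul_comm]
    ring
  have hb : ((d - m) ⬝ᵥ (R - vecMulVec m m)⁻¹ *ᵥ (d - m))⁻¹ ≠ 0 := inv_ne_zero hMFden
  funext i
  simp only [Pi.smul_apply, smul_eq_mul]
  rw [hmain i]
  rw [← mul_assoc, div_mul_cancel₀ _ hb]
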